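/- In a distance-hereditary graph G, if the projection Π_v = Pr(v, I(s,t)) of a vertex v onto the interval I(s,t) intersects two distinct slices of I(s,t), then every shortest path from s to t contains a vertex of Π_v. -/

import Mathlib

open SimpleGraph

variable {V : Type*}

/-- Distance from a vertex to a set of vertices. -/
noncomputable def setDist (G : SimpleGraph V) (x : V) (S : Set V) : ℕ :=
  sInf (G.dist x '' S)

/-- Eccentricity of a set of vertices. -/
noncomputable def eccSet (G : SimpleGraph V) [Fintype V] (S : Set V) : ℕ :=
  Finset.univ.sup fun v => setDist G v S

/-- Eccentricity of a vertex. -/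
noncomputable def eccV (G : SimpleGraph V) [Fintype V] (v : V) : ℕ :=
  Finset.univ.sup fun u => G.dist v u

/-- Diameter of a graph. -/
noncomputable def diamG (G : SimpleGraph V) [Fintype V] : ℕ :=
  Finset.univ.sup fun v => eccV G v

/-- Projection of a vertex onto a set. -/
def proj (G : SimpleGraph V) (x : V) (S : Set V) : Set V :=
  {u ∈ S | G.dist x u = setDist G x S}

/-- The interval between two vertices. -/
def interval (G : SimpleGraph V) (a b : V) : Set V :=
  {w | G.dist a b = G.dist a w + G.dist w b}

/-- Distance-hereditary: distances in connected induced subgraphs equal distances in `G`. -/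
def DistHereditary (G : SimpleGraph V) : Prop :=
  ∀ S : Set V, (G.induce S).Connected →
    ∀ u v : S, (G.induce S).dist u v = G.dist u.1 v.1

/-- A walk is a shortest path. -/
def IsShortestPath (G : SimpleGraph V) {a b : V} (p : G.Walk a b) : Prop :=
  p.IsPath ∧ p.length = G.dist a b

/-- Every vertex on a geodesic walk is metrically between the endpoints. -/
lemma split_lemma (G : SimpleGraph V) (hconn : G.Connected) {a b : V} (W : G.Walk a b) :
    W.length = G.dist a b → ∀ x ∈ W.support, G.dist a x + G.dist x b = G.dist a b := by
  induction W with
  | nil =>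
    intro _ x hx
    simp only [Walk.support_nil, List.mem_singleton] at hx
    subst hx
    simp
  | @cons u c b h W ih =>
    intro hlen x hx
    have huc : G.dist u c ≤ 1 := by simpa using SimpleGraph.dist_le h.toWalk
    have h1 : G.dist u b ≤ G.dist u c + G.dist c b := hconn.dist_triangle
    have h2 : G.dist c b ≤ W.length := SimpleGraph.dist_le W
    have hlen' : W.length = G.dist c b := by
      simp only [Walk.length_cons] at hlen
      omega
    rw [Walk.support_cons, List.mem_cons] at hx
    rcases hx with rfl | hx
    · simp
    · have hix := ih hlen' x hx
      have t0 : G.dist u x ≤ G.dist u c + G.dist c x := hconn.dist_triangle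
      have t2 : G.dist u b ≤ G.dist u x + G.dist x b := hconn.dist_triangle
      simp only [Walk.length_cons] at hlen
      omega

/-- On a geodesic from a vertex near `v` into the set `I`, whose off-`I` vertices are
all at distance `< k` from `v`, there is a vertex of `I` at distance exactly `k` from `v`,
lying metrically between `v` and the far endpoint. -/
lemma key_lemma (G : SimpleGraph V) (hconn : G.Connected) (v : V) (I : Set V) (k : ℕ)
    {u t : V} (R : G.Walk u t) :
    G.dist v u ≤ k → G.dist v u + R.length = G.dist v t →
      t ∈ I → (∀ w ∈ I, k ≤ G.dist v w) →
      (∀ x ∈ R.support, x ∉ I → G.dist v x + 1 ≤ k) →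
      ∃ y ∈ R.support, y ∈ I ∧ G.dist v y = k ∧ G.dist v t = k + G.dist y t := by
  induction R with
  | nil =>
    rename_i w
    intro hu hlen ht hk _
    have hw : G.dist v w = k := le_antisymm hu (hk w ht)
    refine ⟨w, by simp, ht, hw, ?_⟩
    rw [SimpleGraph.dist_self, hw]; omega
  | @cons u c t h W ih =>
    intro hu hlen ht hk hA
    by_cases huI : u ∈ I
    · have hvu : G.dist v u = k := le_antisymm hu (hk u huI)
      refine ⟨u, by simp, huI, hvu, ?_⟩
      have h1 : G.dist u t ≤ (Walk.cons h W).length := SimpleGraph.dist_le _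
      have h2 : G.dist v t ≤ G.dist v u + G.dist u t := hconn.dist_triangle
      omega
    · have hu1 : G.dist v u + 1 ≤ k := hA u (by simp) huI
      have huc : G.dist u c ≤ 1 := by simpa using SimpleGraph.dist_le h.toWalk
      have t1 : G.dist v c ≤ G.dist v u + G.dist u c := hconn.dist_triangle
      have t2 : G.dist v t ≤ G.dist v c + G.dist c t := hconn.dist_triangle
      have t3 : G.dist c t ≤ W.length := SimpleGraph.dist_le W
      simp only [Walk.length_cons] at hlen
      have hvc : G.dist v c = G.dist v u + 1 := by omega
      obtain ⟨y, hy, hyI, hyk, hyt⟩ := ih (by omega) (by omega) ht hk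
        (fun x hx hxI => hA x (by simp [hx]) hxI)
      exact ⟨y, by simp [hy], hyI, hyk, hyt⟩

/-- In a distance-hereditary graph, the support of any walk contains a geodesic
between its endpoints. -/
lemma transfer_lemma (G : SimpleGraph V) (hdh : DistHereditary G) {a b : V} (W : G.Walk a b) :
    ∃ R : G.Walk a b, R.length = G.dist a b ∧ ∀ x ∈ R.support, x ∈ W.support := by
  classical
  set S : Set V := {x | x ∈ W.support} with hS
  have hc : (G.induce S).Connected := W.connected_induce_support
  have ha : a ∈ S := W.start_mem_support
  have hb : b ∈ S := W.end_mem_support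
  have hd := hdh S hc ⟨a, ha⟩ ⟨b, hb⟩
  obtain ⟨R₀, hR₀⟩ := hc.exists_walk_length_eq_dist ⟨a, ha⟩ ⟨b, hb⟩
  refine ⟨R₀.map (SimpleGraph.Embedding.induce S).toHom, ?_, ?_⟩
  · exact (Walk.length_map _ _).trans (hR₀.trans hd)
  · intro x hx
    replace hx := Eq.mp (congrArg (x ∈ ·) (Walk.support_map (f := (SimpleGraph.Embedding.induce S).toHom) (p := R₀))) hx
    obtain ⟨y, _, rfl⟩ := List.mem_map.mp hx
    exact y.2

lemma main_lemma (G : SimpleGraph V) (hconn : G.Connected)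
    (hdh : DistHereditary G) (s t v : V) (p q : V)
    (hp : p ∈ proj G v (interval G s t)) (hq : q ∈ proj G v (interval G s t))
    (hij : G.dist s p < G.dist s q) (P : G.Walk s t) (hP : P.length = G.dist s t) :
    ∃ z ∈ P.support, z ∈ proj G v (interval G s t) := by
  set I : Set V := interval G s t with hI
  set k : ℕ := setDist G v I with hkdef
  have hk : ∀ w ∈ I, k ≤ G.dist v w := fun w hw => Nat.sInf_le ⟨w, hw, rfl⟩
  obtain ⟨hpI, hpd⟩ := hp
  obtain ⟨hqI, hqd⟩ := hq
  -- shortest walks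
  obtain ⟨A, hA⟩ := hconn.exists_walk_length_eq_dist v p
  obtain ⟨B, hB⟩ := hconn.exists_walk_length_eq_dist s p
  -- support membership facts
  have hPsup : ∀ x ∈ P.support, x ∈ I := by
    intro x hx
    exact split_lemma G hconn P hP x hx |>.symm
  have hBsup : ∀ x ∈ B.support, x ∈ I ∧ G.dist s x ≤ G.dist s p := by
    intro x hx
    have hsplit := split_lemma G hconn B hB x hx
    have h1 : G.dist s t ≤ G.dist s x + G.dist x t := hconn.dist_triangle
    have h2 : G.dist x t ≤ G.dist x p + G.dist p t := hconn.dist_triangle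
    have hpI' : G.dist s t = G.dist s p + G.dist p t := hpI
    refine ⟨?_, by omega⟩
    show G.dist s t = G.dist s x + G.dist x t
    omega
  have hAsup : ∀ x ∈ A.support, x ∉ I → G.dist v x + 1 ≤ k := by
    intro x hx hxI
    have hsplit := split_lemma G hconn A hA x hx
    rw [hpd] at hsplit
    by_contra hcon
    have hvx : G.dist v x = k := by omega
    have : G.dist x p = 0 := by omega
    have : x = p := (hconn.dist_eq_zero_iff).mp this
    exact hxI (this ▸ hpI)
  -- the combined walk and its geodesic replacement
  set W : G.Walk v t := A.append (B.reverse.append P) with hW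
  obtain ⟨R, hRlen, hRsup⟩ := transfer_lemma G hdh W
  have hRW : ∀ x ∈ R.support, x ∈ A.support ∨ x ∈ B.support ∨ x ∈ P.support := by
    intro x hx
    have := hRsup x hx
    rw [hW, Walk.mem_support_append_iff, Walk.mem_support_append_iff,
      Walk.support_reverse, List.mem_reverse] at this
    tauto
  have htI : t ∈ I := by
    show G.dist s t = G.dist s t + G.dist t t
    simp
  obtain ⟨y, hy, hyI, hyk, hyt⟩ := key_lemma G hconn v I k R (by rw [SimpleGraph.dist_self]; exact Nat.zero_le k)
    (by rw [SimpleGraph.dist_self, Nat.zero_add]; exact hRlen)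
    htI hk (by
      intro x hx hxI
      rcases hRW x hx with h | h | h
      · exact hAsup x h hxI
      · exact absurd (hBsup x h).1 hxI
      · exact absurd (hPsup x h) hxI)
  -- if y is on P, we are done
  rcases hRW y hy with hyA | hyB | hyP
  · -- y on A: then y = p, reduce to the B case conclusion
    have hsplit := split_lemma G hconn A hA y hyA
    rw [hpd] at hsplit
    have : G.dist y p = 0 := by omega
    have hyp : y = p := (hconn.dist_eq_zero_iff).mp this
    -- contradiction via q
    exfalso
    have hyI' : G.dist s t = G.dist s y + G.dist y t := hyI
    have hqI' : G.dist s t = G.dist s q + G.dist q t := hqI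
    have htri : G.dist v t ≤ G.dist v q + G.dist q t := hconn.dist_triangle
    rw [hqd] at htri
    have hsy : G.dist s y ≤ G.dist s p := le_of_eq (by rw [hyp])
    omega
  · exfalso
    obtain ⟨hyI', hsy⟩ := hBsup y hyB
    have hyI'' : G.dist s t = G.dist s y + G.dist y t := hyI'
    have hqI' : G.dist s t = G.dist s q + G.dist q t := hqI
    have htri : G.dist v t ≤ G.dist v q + G.dist q t := hconn.dist_triangle
    rw [hqd] at htri
    omega
  · exact ⟨y, hyP, hyI, hyk⟩

theorem stmt_5 {V : Type*} [Fintype V] (G : SimpleGraph V) (hconn : G.Connected)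
    (hdh : DistHereditary G) (s t v : V) (p q : V)
    (hp : p ∈ proj G v (interval G s t)) (hq : q ∈ proj G v (interval G s t))
    (hpq : G.dist s p ≠ G.dist s q) :
    ∀ (P : G.Walk s t), IsShortestPath G P →
      ∃ z ∈ P.support, z ∈ proj G v (interval G s t) := by
  intro P hSP
  rcases lt_trichotomy (G.dist s p) (G.dist s q) with h | h | h
  · exact main_lemma G hconn hdh s t v p q hp hq h P hSP.2
  · exact absurd h hpq
  · exact main_lemma G hconn hdh s t v q p hq hp h P hSP.2
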